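/- Internal dynamics of the augmented anti-windup controller under input saturation: Let A ∈ ℝ^{n×n}, B ∈ ℝ^{n×m}, T ≥ 1, N ≥ 1, τ ∈ ℕ, levels 0 = η_0 ≤ η_1 ≤ … ≤ η_N, and for each i ∈ {1,…,N} matrices (R^i, M^i) satisfying the SLS feasibility conditions for (A,B) with horizon T, with the input-safety bound Σ_{i=1}^N (η_i − η_{i−1}) ‖[M^i_T ⋯ M^i_1]‖ ≤ u_max. Let P_η be the saturation projection, define the blended maps Ψu_t(ŵ_{t:0}) = Σ_{i=1}^N Σ_{k=1}^{min(t+1,T)} M^i_k (P_{η_i} − P_{η_{i−1}})(ŵ_{t+1−k}) and the augmented state map Ψxa_t(ŵ_{t:0}) = Σ_{i=1}^N Σ_{k=1}^{min(t+1,T)} R^i_k (P_{η_i} − P_{η_{i−1}})(ŵ_{t+1−k}) + Σ_{k=1}^{min(τ+1,t+1)} A^{k−1}(ŵ_{t+1−k} − P_{η_N}(ŵ_{t+1−k})). Consider the saturated closed loop: x_0 = w_0, x_t = A x_{t−1} + B P_{u_max}(u_{t−1}) + w_t for t ≥ 1, with controller u_t = Ψu_t(ŵ_t,…,ŵ_0),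 ŵ_0 = x_0, ŵ_{t+1} = x_{t+1} − Ψxa_{t+1}(0, ŵ_t, …, ŵ_0). Then for every disturbance sequence w : ℕ → ℝⁿ: (a) |u_t| ≤ u_max for all t, so P_{u_max}(u_t) = u_t and the input never saturates; (b) x_t = Ψxa_t(ŵ_t, …, ŵ_0) for all t; and (c) the internal state satisfies ŵ_t = w_t for 0 ≤ t ≤ τ and ŵ_t = A^{τ+1}(ŵ_{t−τ−1} − P_{η_N}(ŵ_{t−τ−1})) + w_t for t ≥ τ+1. -/

import Mathlib

/-- Scalar saturation at level `η`: `sat(a,η) = sign(a)·min(|a|,η)`. -/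
noncomputable def satScalar (η a : ℝ) : ℝ := Real.sign a * min |a| η

/-- Coordinatewise saturation projection (sup norm). -/
noncomputable def satProj {n : ℕ} (η : ℝ) (w : Fin n → ℝ) : Fin n → ℝ :=
  fun i => satScalar η (w i)

/-- Induced ℓ∞→ℓ∞ norm (maximum absolute row sum) of the row-wise
concatenation `[M_T M_{T-1} ⋯ M_1]`. -/
noncomputable def concatNorm {p n : ℕ} (T : ℕ) (M : ℕ → Matrix (Fin p) (Fin n) ℝ) : ℝ :=
  ⨆ r : Fin p, ∑ k ∈ Finset.Icc 1 T, ∑ j : Fin n, |M k r j|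

/-- SLS feasibility conditions for `(A, B)` with horizon `T`. -/
def SLSFeasible {n m : ℕ} (A : Matrix (Fin n) (Fin n) ℝ) (B : Matrix (Fin n) (Fin m) ℝ)
    (T : ℕ) (R : ℕ → Matrix (Fin n) (Fin n) ℝ) (M : ℕ → Matrix (Fin m) (Fin n) ℝ) : Prop :=
  R 1 = 1 ∧
  (∀ k : ℕ, 1 ≤ k → k + 1 ≤ T → R (k + 1) = A * R k + B * M k) ∧
  A * R T + B * M T = 0

/-- The blended (input) component map:
`Ψu_t(h_{t:0}) = Σ_{i=1}^N Σ_{k=1}^{min(t+1,T)}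
  M^i_k (P_{η_i} − P_{η_{i−1}})(h_{t+1−k})`. -/
noncomputable def blendOut {p n : ℕ} (Mm : ℕ → ℕ → Matrix (Fin p) (Fin n) ℝ)
    (η : ℕ → ℝ) (N T : ℕ) (h : ℕ → Fin n → ℝ) (t : ℕ) : Fin p → ℝ :=
  ∑ i ∈ Finset.Icc 1 N, ∑ k ∈ Finset.Icc 1 (min (t + 1) T),
    (Mm i k).mulVec (satProj (η i) (h (t + 1 - k)) - satProj (η (i - 1)) (h (t + 1 - k)))

/-- The augmented (anti-windup) state component map:
`Ψxa_t(h_{t:0}) = Σ_{i=1}^N Σ_{k=1}^{min(t+1,T)}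
  R^i_k (P_{η_i} − P_{η_{i−1}})(h_{t+1−k})
  + Σ_{k=1}^{min(τ+1,t+1)} A^{k−1}(h_{t+1−k} − P_{η_N}(h_{t+1−k}))`. -/
noncomputable def augXmap {n : ℕ} (R : ℕ → ℕ → Matrix (Fin n) (Fin n) ℝ)
    (A : Matrix (Fin n) (Fin n) ℝ) (η : ℕ → ℝ) (N T τ : ℕ)
    (h : ℕ → Fin n → ℝ) (t : ℕ) : Fin n → ℝ :=
  blendOut R η N T h t +
  ∑ k ∈ Finset.Icc 1 (min (τ + 1) (t + 1)),
    (A ^ (k - 1)).mulVec (h (t + 1 - k) - satProj (η N) (h (t + 1 - k)))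

lemma satScalar_zero (η : ℝ) : satScalar η 0 = 0 := by
  simp [satScalar, Real.sign_zero]
lemma satScalar_lvl_zero (a : ℝ) : satScalar 0 a = 0 := by
  simp [satScalar, min_eq_right (abs_nonneg a)]
lemma satScalar_of_le {η a : ℝ} (h : |a| ≤ η) : satScalar η a = a := by
  rcases lt_trichotomy a 0 with h0 | h0 | h0
  · rw [satScalar, Real.sign_of_neg h0, min_eq_left h, abs_of_neg h0]; ring
  · simp [h0, satScalar_zero]
  · rw [satScalar, Real.sign_of_pos h0, min_eq_left h, abs_of_pos h0]; ring
lemma satScalar_sub_le {η₁ η₂ : ℝ} (h1 : 0 ≤ η₁) (h12 : η₁ ≤ η₂) (a : ℝ) :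
    |satScalar η₂ a - satScalar η₁ a| ≤ η₂ - η₁ := by
  rcases lt_trichotomy a 0 with h0 | h0 | h0
  · rw [satScalar, satScalar, Real.sign_of_neg h0]
    rw [abs_of_nonpos (by nlinarith [min_le_min (le_refl |a|) h12] : (-1) * min |a| η₂ - (-1) * min |a| η₁ ≤ 0)]
    rcases le_total |a| η₁ with h | h
    · rw [min_eq_left h, min_eq_left (h.trans h12)]; ring_nf; linarith
    · rw [min_eq_right h]
      rcases le_total |a| η₂ with h' | h'
      · rw [min_eq_left h']; nlinarith
      · rw [min_eq_right h']; nlinarith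
  · simp [h0, satScalar_zero]; exact h12
  · rw [satScalar, satScalar, Real.sign_of_pos h0, one_mul, one_mul]
    rw [abs_of_nonneg (by exact sub_nonneg.2 (min_le_min (le_refl _) h12))]
    rcases le_total |a| η₁ with h | h
    · rw [min_eq_left h, min_eq_left (h.trans h12)]; linarith
    · rw [min_eq_right h]
      rcases le_total |a| η₂ with h' | h'
      · rw [min_eq_left h']; nlinarith
      · rw [min_eq_right h']
lemma satScalar_abs_le {η : ℝ} (hη : 0 ≤ η) (a : ℝ) : |satScalar η a| ≤ η := by
  have := satScalar_sub_le (le_refl (0:ℝ)) hη a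
  simpa [satScalar_lvl_zero] using this
lemma satProj_zero {n : ℕ} (η : ℝ) : satProj η (0 : Fin n → ℝ) = 0 := by
  funext i; simp [satProj, satScalar_zero]
lemma satProj_lvl_zero {n : ℕ} (v : Fin n → ℝ) : satProj 0 v = 0 := by
  funext i; simp [satProj, satScalar_lvl_zero]
lemma sum_telescope_Icc {G : Type*} [AddCommGroup G] (f : ℕ → G) (N : ℕ) :
    ∑ i ∈ Finset.Icc 1 N, (f i - f (i - 1)) = f N - f 0 := by
  induction N with
  | zero => simp
  | succ N ih =>
    rw [show Finset.Icc 1 (N+1) = insert (N+1) (Finset.Icc 1 N) by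
      ext a; simp [Finset.mem_Icc, Finset.mem_insert]; omega]
    rw [Finset.sum_insert (by simp)]
    rw [ih]
    simp only [Nat.add_sub_cancel]
    abel
lemma Icc_shift_sum {G : Type*} [AddCommMonoid G] (f : ℕ → G) (m : ℕ) (hm : 1 ≤ m)
    (h1 : f 1 = 0) : ∑ k ∈ Finset.Icc 1 m, f k = ∑ k ∈ Finset.Icc 1 (m - 1), f (k + 1) := by
  rw [show Finset.Icc 1 m = insert 1 (Finset.Icc 2 m) by
      ext a; simp [Finset.mem_Icc, Finset.mem_insert]; omega]
  rw [Finset.sum_insert (by simp), h1, zero_add]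
  have hmap : Finset.Icc 2 m = (Finset.Icc 1 (m - 1)).map (addRightEmbedding 1) := by
    rw [Finset.map_add_right_Icc]
    congr 1
    omega
  rw [hmap, Finset.sum_map]
  rfl
lemma sum_split_one {G : Type*} [AddCommMonoid G] (f f' : ℕ → G) (m : ℕ) (hm : 1 ≤ m)
    (h1 : f' 1 = 0) (hk : ∀ k, 2 ≤ k → k ≤ m → f k = f' k) :
    ∑ k ∈ Finset.Icc 1 m, f k = f 1 + ∑ k ∈ Finset.Icc 1 m, f' k := by
  have hins : Finset.Icc 1 m = insert 1 (Finset.Icc 2 m) := by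
    ext a; simp [Finset.mem_Icc, Finset.mem_insert]; omega
  rw [hins, Finset.sum_insert (by simp), Finset.sum_insert (by simp), h1, zero_add]
  congr 1
  refine Finset.sum_congr rfl fun k hk' => ?_
  simp only [Finset.mem_Icc] at hk'
  exact hk k hk'.1 hk'.2
lemma sum_split_top {G : Type*} [AddCommMonoid G] (f : ℕ → G) (m : ℕ) (hm : 1 ≤ m) :
    ∑ k ∈ Finset.Icc 1 m, f k = (∑ k ∈ Finset.Icc 1 (m - 1), f k) + f m := by
  have hins : Finset.Icc 1 m = insert m (Finset.Icc 1 (m - 1)) := by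
    ext a; simp [Finset.mem_Icc, Finset.mem_insert]; omega
  rw [hins, Finset.sum_insert (by simp [Finset.mem_Icc]; omega)]
  exact add_comm _ _
lemma mulVec_finset_sum {p q : ℕ} (A : Matrix (Fin p) (Fin q) ℝ) {ι : Type*} (s : Finset ι)
    (f : ι → Fin q → ℝ) : A.mulVec (∑ i ∈ s, f i) = ∑ i ∈ s, A.mulVec (f i) := by
  classical
  induction s using Finset.induction_on with
  | empty => simp [Matrix.mulVec_zero]
  | insert _ _ h ih => rw [Finset.sum_insert h, Finset.sum_insert h, Matrix.mulVec_add, ih]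
lemma sum_satProj_diff {n : ℕ} (η : ℕ → ℝ) (hη0 : η 0 = 0) (N : ℕ) (v : Fin n → ℝ) :
    ∑ i ∈ Finset.Icc 1 N, (satProj (η i) v - satProj (η (i - 1)) v) = satProj (η N) v := by
  rw [sum_telescope_Icc (fun i => satProj (η i) v) N, hη0, satProj_lvl_zero, sub_zero]

/-- The `k = 1` extraction for `augXmap`. -/
lemma augXmap_extract {n : ℕ} (R : ℕ → ℕ → Matrix (Fin n) (Fin n) ℝ)
    (A : Matrix (Fin n) (Fin n) ℝ) (η : ℕ → ℝ) (hη0 : η 0 = 0) (N T τ : ℕ) (hT : 1 ≤ T)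
    (hR1 : ∀ i ∈ Finset.Icc 1 N, R i 1 = 1) (h : ℕ → Fin n → ℝ) (t : ℕ) :
    augXmap R A η N T τ h t
      = h t + augXmap R A η N T τ (fun j => if j = t then 0 else h j) t := by
  have hm1 : 1 ≤ min (t + 1) T := by omega
  have hm2 : 1 ≤ min (τ + 1) (t + 1) := by omega
  have hblend : blendOut R η N T h t
      = satProj (η N) (h t) + blendOut R η N T (fun j => if j = t then 0 else h j) t := by
    unfold blendOut
    have hstep : ∀ i ∈ Finset.Icc 1 N,
        (∑ k ∈ Finset.Icc 1 (min (t + 1) T),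
          (R i k).mulVec (satProj (η i) (h (t + 1 - k)) - satProj (η (i - 1)) (h (t + 1 - k))))
        = (satProj (η i) (h t) - satProj (η (i - 1)) (h t)) +
          ∑ k ∈ Finset.Icc 1 (min (t + 1) T),
            (R i k).mulVec
              (satProj (η i) ((fun j => if j = t then 0 else h j) (t + 1 - k)) -
               satProj (η (i - 1)) ((fun j => if j = t then 0 else h j) (t + 1 - k))) := by
      intro i hi
      have := sum_split_one
        (fun k => (R i k).mulVec
          (satProj (η i) (h (t + 1 - k)) - satProj (η (i - 1)) (h (t + 1 - k))))
        (fun k => (R i k).mulVec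
          (satProj (η i) ((fun j => if j = t then 0 else h j) (t + 1 - k)) -
           satProj (η (i - 1)) ((fun j => if j = t then 0 else h j) (t + 1 - k))))
        (min (t + 1) T) hm1 ?_ ?_
      · rw [this]
        congr 1
        simp only [Nat.add_sub_cancel, hR1 i hi, Matrix.one_mulVec]
      · simp [satProj_zero]
      · intro k h2 hkm
        have : t + 1 - k ≠ t := by
          have : k ≤ t + 1 := by omega
          omega
        simp only [if_neg this]
    rw [Finset.sum_congr rfl hstep, Finset.sum_add_distrib,
      sum_satProj_diff η hη0 N (h t)]
  have htail : (∑ k ∈ Finset.Icc 1 (min (τ + 1) (t + 1)),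
        (A ^ (k - 1)).mulVec (h (t + 1 - k) - satProj (η N) (h (t + 1 - k))))
      = (h t - satProj (η N) (h t)) +
        ∑ k ∈ Finset.Icc 1 (min (τ + 1) (t + 1)),
          (A ^ (k - 1)).mulVec
            ((fun j => if j = t then 0 else h j) (t + 1 - k) -
             satProj (η N) ((fun j => if j = t then 0 else h j) (t + 1 - k))) := by
    have := sum_split_one
      (fun k => (A ^ (k - 1)).mulVec (h (t + 1 - k) - satProj (η N) (h (t + 1 - k))))
      (fun k => (A ^ (k - 1)).mulVec
        ((fun j => if j = t then 0 else h j) (t + 1 - k) -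
         satProj (η N) ((fun j => if j = t then 0 else h j) (t + 1 - k))))
      (min (τ + 1) (t + 1)) hm2 ?_ ?_
    · rw [this]
      congr 1
      simp only [Nat.add_sub_cancel, Nat.sub_self, pow_zero, Matrix.one_mulVec]
    · simp [satProj_zero]
    · intro k h2 hkm
      have hne : t + 1 - k ≠ t := by omega
      simp only [if_neg hne]
  unfold augXmap
  rw [hblend, htail]
  abel
lemma augXmap_zero_at_zero {n : ℕ} (R : ℕ → ℕ → Matrix (Fin n) (Fin n) ℝ)
    (A : Matrix (Fin n) (Fin n) ℝ) (η : ℕ → ℝ) (N T τ : ℕ)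
    (h : ℕ → Fin n → ℝ) (hh0 : h 0 = 0) :
    augXmap R A η N T τ h 0 = 0 := by
  unfold augXmap blendOut
  have hz : ∀ k ∈ Finset.Icc 1 (min (0 + 1) T), h (0 + 1 - k) = 0 := by
    intro k hk
    simp only [Finset.mem_Icc] at hk
    have : 0 + 1 - k = 0 := by omega
    rw [this, hh0]
  have hz2 : ∀ k ∈ Finset.Icc 1 (min (τ + 1) (0 + 1)), h (0 + 1 - k) = 0 := by
    intro k hk
    simp only [Finset.mem_Icc] at hk
    have : 0 + 1 - k = 0 := by omega
    rw [this, hh0]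
  rw [Finset.sum_eq_zero (fun i _ => Finset.sum_eq_zero
    (fun k hk => by rw [hz k hk]; simp [satProj_zero]))]
  rw [Finset.sum_eq_zero (fun k hk => by rw [hz2 k hk]; simp [satProj_zero])]
  simp
lemma step_identity {n m : ℕ} (T N τ : ℕ) (hT : 1 ≤ T)
    (A : Matrix (Fin n) (Fin n) ℝ) (B : Matrix (Fin n) (Fin m) ℝ) (η : ℕ → ℝ)
    (R : ℕ → ℕ → Matrix (Fin n) (Fin n) ℝ) (M : ℕ → ℕ → Matrix (Fin m) (Fin n) ℝ)
    (hSLS : ∀ i ∈ Finset.Icc 1 N, SLSFeasible A B T (R i) (M i))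
    (h : ℕ → Fin n → ℝ) (t : ℕ) :
    A.mulVec (augXmap R A η N T τ h t) + B.mulVec (blendOut M η N T h t)
      = augXmap R A η N T τ (fun j => if j = t + 1 then 0 else h j) (t + 1)
        + (if τ ≤ t then (A ^ (τ + 1)).mulVec
            (h (t - τ) - satProj (η N) (h (t - τ))) else 0) := by
  set h' : ℕ → Fin n → ℝ := fun j => if j = t + 1 then 0 else h j with hh'
  -- part 1 : SLS part
  have S1 : ∀ i ∈ Finset.Icc 1 N,
      A.mulVec (∑ k ∈ Finset.Icc 1 (min (t + 1) T),
        (R i k).mulVec (satProj (η i) (h (t + 1 - k)) - satProj (η (i - 1)) (h (t + 1 - k))))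
      + B.mulVec (∑ k ∈ Finset.Icc 1 (min (t + 1) T),
        (M i k).mulVec (satProj (η i) (h (t + 1 - k)) - satProj (η (i - 1)) (h (t + 1 - k))))
      = ∑ k ∈ Finset.Icc 1 (min (t + 1 + 1) T),
        (R i k).mulVec
          (satProj (η i) (h' (t + 1 + 1 - k)) - satProj (η (i - 1)) (h' (t + 1 + 1 - k))) := by
    intro i hi
    obtain ⟨hR1, hRmid, hRtop⟩ := hSLS i hi
    rw [mulVec_finset_sum, mulVec_finset_sum, ← Finset.sum_add_distrib]
    have hL : ∀ k ∈ Finset.Icc 1 (min (t + 1) T),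
        A.mulVec ((R i k).mulVec
            (satProj (η i) (h (t + 1 - k)) - satProj (η (i - 1)) (h (t + 1 - k))))
        + B.mulVec ((M i k).mulVec
            (satProj (η i) (h (t + 1 - k)) - satProj (η (i - 1)) (h (t + 1 - k))))
        = (A * R i k + B * M i k).mulVec
            (satProj (η i) (h (t + 1 - k)) - satProj (η (i - 1)) (h (t + 1 - k))) := by
      intro k _
      rw [Matrix.mulVec_mulVec, Matrix.mulVec_mulVec, Matrix.add_mulVec]
    rw [Finset.sum_congr rfl hL]
    -- right side : shift the sum
    have hm : 1 ≤ min (t + 1 + 1) T := by omega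
    rw [Icc_shift_sum _ _ hm (by simp [hh', satProj_zero])]
    have hRid : ∀ k ∈ Finset.Icc 1 (min (t + 1 + 1) T - 1),
        (R i (k + 1)).mulVec
          (satProj (η i) (h' (t + 1 + 1 - (k + 1))) -
           satProj (η (i - 1)) (h' (t + 1 + 1 - (k + 1))))
        = (R i (k + 1)).mulVec
          (satProj (η i) (h (t + 1 - k)) - satProj (η (i - 1)) (h (t + 1 - k))) := by
      intro k hk
      simp only [Finset.mem_Icc] at hk
      have e1 : t + 1 + 1 - (k + 1) = t + 1 - k := by omega
      have e2 : t + 1 - k ≠ t + 1 := by omega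
      rw [e1, hh']
      simp only [if_neg e2]
    rw [Finset.sum_congr rfl hRid]
    rcases le_or_gt (t + 2) T with hcase | hcase
    · have e1 : min (t + 1) T = t + 1 := by omega
      have e2 : min (t + 1 + 1) T - 1 = t + 1 := by omega
      rw [e1, e2]
      refine Finset.sum_congr rfl fun k hk => ?_
      simp only [Finset.mem_Icc] at hk
      rw [hRmid k hk.1 (by omega)]
    · have e1 : min (t + 1) T = T := by omega
      have e2 : min (t + 1 + 1) T - 1 = T - 1 := by omega
      rw [e1, e2, sum_split_top _ T hT]
      have : (A * R i T + B * M i T).mulVec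
          (satProj (η i) (h (t + 1 - T)) - satProj (η (i - 1)) (h (t + 1 - T))) = 0 := by
        rw [hRtop, Matrix.zero_mulVec]
      rw [this, add_zero]
      refine Finset.sum_congr rfl fun k hk => ?_
      simp only [Finset.mem_Icc] at hk
      rw [hRmid k hk.1 (by omega)]
  -- part 2 : tail part
  have S2 : A.mulVec (∑ k ∈ Finset.Icc 1 (min (τ + 1) (t + 1)),
        (A ^ (k - 1)).mulVec (h (t + 1 - k) - satProj (η N) (h (t + 1 - k))))
      = (∑ k ∈ Finset.Icc 1 (min (τ + 1) (t + 1 + 1)),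
          (A ^ (k - 1)).mulVec (h' (t + 1 + 1 - k) - satProj (η N) (h' (t + 1 + 1 - k))))
        + (if τ ≤ t then (A ^ (τ + 1)).mulVec
            (h (t - τ) - satProj (η N) (h (t - τ))) else 0) := by
    rw [mulVec_finset_sum]
    have hL : ∀ k ∈ Finset.Icc 1 (min (τ + 1) (t + 1)),
        A.mulVec ((A ^ (k - 1)).mulVec (h (t + 1 - k) - satProj (η N) (h (t + 1 - k))))
        = (A ^ k).mulVec (h (t + 1 - k) - satProj (η N) (h (t + 1 - k))) := by
      intro k hk
      simp only [Finset.mem_Icc] at hk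
      rw [Matrix.mulVec_mulVec]
      have hpow : A * A ^ (k - 1) = A ^ k := by
        conv_rhs => rw [show k = (k - 1) + 1 by omega]
        rw [pow_succ']
      rw [hpow]
    rw [Finset.sum_congr rfl hL]
    have hm : 1 ≤ min (τ + 1) (t + 1 + 1) := by omega
    rw [Icc_shift_sum _ _ hm (by simp [hh', satProj_zero])]
    have hRid : ∀ k ∈ Finset.Icc 1 (min (τ + 1) (t + 1 + 1) - 1),
        (A ^ (k + 1 - 1)).mulVec
          (h' (t + 1 + 1 - (k + 1)) - satProj (η N) (h' (t + 1 + 1 - (k + 1))))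
        = (A ^ k).mulVec (h (t + 1 - k) - satProj (η N) (h (t + 1 - k))) := by
      intro k hk
      simp only [Finset.mem_Icc] at hk
      have e1 : t + 1 + 1 - (k + 1) = t + 1 - k := by omega
      have e2 : t + 1 - k ≠ t + 1 := by omega
      have e3 : k + 1 - 1 = k := by omega
      rw [e1, e3, hh']
      simp only [if_neg e2]
    rw [Finset.sum_congr rfl hRid]
    rcases le_or_gt τ t with hcase | hcase
    · have e1 : min (τ + 1) (t + 1) = τ + 1 := by omega
      have e2 : min (τ + 1) (t + 1 + 1) - 1 = τ := by omega
      rw [e1, e2, sum_split_top _ (τ + 1) (by omega), if_pos hcase]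
      have e3 : τ + 1 - 1 = τ := by omega
      have e4 : t + 1 - (τ + 1) = t - τ := by omega
      rw [e3, e4]
    · have e1 : min (τ + 1) (t + 1) = t + 1 := by omega
      have e2 : min (τ + 1) (t + 1 + 1) - 1 = t + 1 := by omega
      rw [e1, e2, if_neg (by omega), add_zero]
  -- assemble
  unfold augXmap blendOut
  rw [Matrix.mulVec_add, mulVec_finset_sum A, mulVec_finset_sum B]
  rw [S2, ← Finset.sum_congr rfl S1, Finset.sum_add_distrib]
  abel
lemma eta_nonneg (η : ℕ → ℝ) (N : ℕ) (hη0 : η 0 = 0)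
    (hmono : ∀ i : ℕ, i < N → η i ≤ η (i + 1)) : ∀ i : ℕ, i ≤ N → 0 ≤ η i := by
  intro i
  induction i with
  | zero => intro _; rw [hη0]
  | succ i ih => intro hle; exact le_trans (ih (by omega)) (hmono i (by omega))
lemma blendOut_bound {n p : ℕ} (T N : ℕ) (η : ℕ → ℝ) (hη0 : η 0 = 0)
    (hmono : ∀ i : ℕ, i < N → η i ≤ η (i + 1)) (M : ℕ → ℕ → Matrix (Fin p) (Fin n) ℝ)
    (umax : ℝ)
    (hsafe : ∑ i ∈ Finset.Icc 1 N, (η i - η (i - 1)) * concatNorm T (M i) ≤ umax)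
    (h : ℕ → Fin n → ℝ) (t : ℕ) (r : Fin p) :
    |blendOut M η N T h t r| ≤ umax := by
  have hnn := eta_nonneg η N hη0 hmono
  have hdnn : ∀ i ∈ Finset.Icc 1 N, 0 ≤ η i - η (i - 1) := by
    intro i hi
    simp only [Finset.mem_Icc] at hi
    have := hmono (i - 1) (by omega)
    rw [show i - 1 + 1 = i by omega] at this
    linarith
  have key : |blendOut M η N T h t r|
      ≤ ∑ i ∈ Finset.Icc 1 N, (η i - η (i - 1)) *
          ∑ k ∈ Finset.Icc 1 (min (t + 1) T), ∑ j : Fin n, |M i k r j| := by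
    have happ : blendOut M η N T h t r
        = ∑ i ∈ Finset.Icc 1 N, ∑ k ∈ Finset.Icc 1 (min (t + 1) T),
            ∑ j : Fin n, M i k r j *
              (satScalar (η i) (h (t + 1 - k) j) - satScalar (η (i - 1)) (h (t + 1 - k) j)) := by
      unfold blendOut
      rw [Finset.sum_apply]
      refine Finset.sum_congr rfl fun i _ => ?_
      rw [Finset.sum_apply]
      refine Finset.sum_congr rfl fun k _ => ?_
      simp [Matrix.mulVec, dotProduct, satProj]
    rw [happ]
    refine (Finset.abs_sum_le_sum_abs _ _).trans (Finset.sum_le_sum fun i hi => ?_)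
    simp only [Finset.mem_Icc] at hi
    have hd1 : 0 ≤ η (i - 1) := hnn (i - 1) (by omega)
    have hd2 : η (i - 1) ≤ η i := by
      have := hmono (i - 1) (by omega)
      rwa [show i - 1 + 1 = i by omega] at this
    calc |∑ k ∈ Finset.Icc 1 (min (t + 1) T), ∑ j : Fin n, M i k r j *
            (satScalar (η i) (h (t + 1 - k) j) - satScalar (η (i - 1)) (h (t + 1 - k) j))|
        ≤ ∑ k ∈ Finset.Icc 1 (min (t + 1) T), ∑ j : Fin n, |M i k r j| * (η i - η (i - 1)) := by
          refine (Finset.abs_sum_le_sum_abs _ _).trans (Finset.sum_le_sum fun k _ => ?_)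
          refine (Finset.abs_sum_le_sum_abs _ _).trans (Finset.sum_le_sum fun j _ => ?_)
          rw [abs_mul]
          exact mul_le_mul_of_nonneg_left (satScalar_sub_le hd1 hd2 _) (abs_nonneg _)
      _ = (η i - η (i - 1)) * ∑ k ∈ Finset.Icc 1 (min (t + 1) T), ∑ j : Fin n, |M i k r j| := by
          rw [Finset.mul_sum]
          refine Finset.sum_congr rfl fun k _ => ?_
          rw [Finset.mul_sum]
          refine Finset.sum_congr rfl fun j _ => ?_
          ring
  refine key.trans (le_trans (Finset.sum_le_sum fun i hi => ?_) hsafe)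
  refine mul_le_mul_of_nonneg_left ?_ (hdnn i hi)
  calc ∑ k ∈ Finset.Icc 1 (min (t + 1) T), ∑ j : Fin n, |M i k r j|
      ≤ ∑ k ∈ Finset.Icc 1 T, ∑ j : Fin n, |M i k r j| := by
        refine Finset.sum_le_sum_of_subset_of_nonneg ?_ fun k _ _ => ?_
        · exact Finset.Icc_subset_Icc_right (min_le_right _ _)
        · positivity
    _ ≤ concatNorm T (M i) := by
        refine le_ciSup (f := fun r : Fin p => ∑ k ∈ Finset.Icc 1 T, ∑ j : Fin n, |M i k r j|)
          ?_ r
        exact Set.Finite.bddAbove (Set.finite_range _)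

/-- Internal dynamics of the augmented anti-windup controller
under input saturation. Under the SLS feasibility conditions for each
`(Rⁱ, Mⁱ)` and the input-safety bound, the saturated closed loop with the
augmented system-level controller satisfies:
(a) `‖u_t‖ ≤ u_max` (so the input never saturates);
(b) `x_t = Ψxa_t(ŵ_t, …, ŵ_0)`;
(c) `ŵ_t = w_t` for `t ≤ τ` and
`ŵ_t = A^{τ+1}(ŵ_{t−τ−1} − P_{η_N}(ŵ_{t−τ−1})) + w_t` for `t ≥ τ+1`. -/
theorem antiwindup_internal_dynamics (n m T N τ : ℕ) (hT : 1 ≤ T) (hN : 1 ≤ N)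
    (A : Matrix (Fin n) (Fin n) ℝ) (B : Matrix (Fin n) (Fin m) ℝ)
    (η : ℕ → ℝ) (hη0 : η 0 = 0) (hmono : ∀ i : ℕ, i < N → η i ≤ η (i + 1))
    (R : ℕ → ℕ → Matrix (Fin n) (Fin n) ℝ) (M : ℕ → ℕ → Matrix (Fin m) (Fin n) ℝ)
    (hSLS : ∀ i ∈ Finset.Icc 1 N, SLSFeasible A B T (R i) (M i))
    (umax : ℝ)
    (hsafe : ∑ i ∈ Finset.Icc 1 N, (η i - η (i - 1)) * concatNorm T (M i) ≤ umax)
    (w x wHat : ℕ → Fin n → ℝ) (u : ℕ → Fin m → ℝ)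
    (hx0 : x 0 = w 0)
    (hx : ∀ t : ℕ, 1 ≤ t →
      x t = A.mulVec (x (t - 1)) + B.mulVec (satProj umax (u (t - 1))) + w t)
    (hu : ∀ t : ℕ, u t = blendOut M η N T wHat t)
    (hwh0 : wHat 0 = x 0)
    (hwh : ∀ t : ℕ, wHat (t + 1) = x (t + 1) -
      augXmap R A η N T τ (fun j => if j = t + 1 then 0 else wHat j) (t + 1)) :
    (∀ t : ℕ, ‖u t‖ ≤ umax ∧ satProj umax (u t) = u t) ∧
    (∀ t : ℕ, x t = augXmap R A η N T τ wHat t) ∧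
    (∀ t : ℕ, t ≤ τ → wHat t = w t) ∧
    (∀ t : ℕ, τ + 1 ≤ t →
      wHat t = (A ^ (τ + 1)).mulVec
          (wHat (t - τ - 1) - satProj (η N) (wHat (t - τ - 1))) + w t) := by
  have hdnn : ∀ i ∈ Finset.Icc 1 N, 0 ≤ η i - η (i - 1) := by
    intro i hi
    simp only [Finset.mem_Icc] at hi
    have := hmono (i - 1) (by omega)
    rw [show i - 1 + 1 = i by omega] at this
    linarith
  have hcn : ∀ i : ℕ, 0 ≤ concatNorm T (M i) := by
    intro i
    exact Real.iSup_nonneg fun r => by positivity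
  have humax : 0 ≤ umax :=
    le_trans (Finset.sum_nonneg fun i hi => mul_nonneg (hdnn i hi) (hcn i)) hsafe
  have ha : ∀ t : ℕ, ‖u t‖ ≤ umax ∧ satProj umax (u t) = u t := by
    intro t
    have hb : ∀ r : Fin m, |u t r| ≤ umax := by
      intro r
      rw [hu t]
      exact blendOut_bound T N η hη0 hmono M umax hsafe wHat t r
    constructor
    · exact (pi_norm_le_iff_of_nonneg humax).2 fun r => by
        rw [Real.norm_eq_abs]; exact hb r
    · funext r
      exact satScalar_of_le (hb r)
  have hR1 : ∀ i ∈ Finset.Icc 1 N, R i 1 = 1 := fun i hi => (hSLS i hi).1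
  have hb : ∀ t : ℕ, x t = augXmap R A η N T τ wHat t := by
    intro t
    cases t with
    | zero =>
      rw [augXmap_extract R A η hη0 N T τ hT hR1 wHat 0,
        augXmap_zero_at_zero R A η N T τ _ (by simp), add_zero, hwh0]
    | succ t =>
      rw [augXmap_extract R A η hη0 N T τ hT hR1 wHat (t + 1), hwh t]
      abel
  have hc : ∀ t : ℕ, wHat (t + 1) =
      (if τ ≤ t then (A ^ (τ + 1)).mulVec
        (wHat (t - τ) - satProj (η N) (wHat (t - τ))) else 0) + w (t + 1) := by
    intro t
    have hx' := hx (t + 1) (by omega)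
    simp only [Nat.add_sub_cancel] at hx'
    rw [(ha t).2, hu t, hb t] at hx'
    rw [hwh t, hx', step_identity T N τ hT A B η R M hSLS wHat t]
    abel
  refine ⟨ha, hb, ?_, ?_⟩
  · intro t ht
    cases t with
    | zero => rw [hwh0, hx0]
    | succ t => rw [hc t, if_neg (by omega), zero_add]
  · intro t ht
    cases t with
    | zero => omega
    | succ s =>
      rw [hc s, if_pos (by omega), show s + 1 - τ - 1 = s - τ by omega]
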